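/- The initial BMO-discrepancy in dimension d equals 12^{−d/2}; i.e., for the empty point set, ‖Δ_∅‖²_BMO := sup_{U ⊆ [0,1)^d, λ_d(U)>0} λ_d(U)^{−1} ∑_{j∈ℕ₀^d} 2^{|j|} ∑_{m∈D_j, I_{j,m}⊆U} |⟨Δ_∅, h_{j,m}⟩|² = 12^{−d}. -/

import Mathlib

open MeasureTheory Set
open scoped Classical

/-- The one-dimensional dyadic Haar function `h_{j,m}`: `+1` on the left half
of the dyadic interval `I_{j,m} = [m/2^j, (m+1)/2^j)`, `-1` on the right half,
`0` elsewhere. -/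
noncomputable def haar1 (j m : ℕ) (x : ℝ) : ℝ :=
  if x ∈ Set.Ico ((m : ℝ) / 2 ^ j) (((m : ℝ) + 1 / 2) / 2 ^ j) then 1
  else if x ∈ Set.Ico (((m : ℝ) + 1 / 2) / 2 ^ j) (((m : ℝ) + 1) / 2 ^ j) then -1
  else 0

/-- The dyadic interval `I_{j,m} = [m/2^j, (m+1)/2^j)`. -/
def dyadicI (j m : ℕ) : Set ℝ := Set.Ico ((m : ℝ) / 2 ^ j) (((m : ℝ) + 1) / 2 ^ j)

/-- The unit cube `[0,1)^d`. -/
def unitBox (d : ℕ) : Set (Fin d → ℝ) := Set.univ.pi fun _ => Set.Ico (0 : ℝ) 1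

/-- The tensor product Haar function `h_{j,m}` on `[0,1)^d`. -/
noncomputable def haarD {d : ℕ} (j m : Fin d → ℕ) (x : Fin d → ℝ) : ℝ :=
  ∏ i, haar1 (j i) (m i) (x i)

/-- The dyadic box `I_{j,m} ⊆ [0,1)^d`. -/
def dyadicBox {d : ℕ} (j m : Fin d → ℕ) : Set (Fin d → ℝ) :=
  Set.univ.pi fun i => dyadicI (j i) (m i)

/-- The Haar coefficient `⟨f, h_{j,m}⟩ = ∫_{[0,1)^d} f·h_{j,m}`. -/
noncomputable def haarCoef {d : ℕ} (f : (Fin d → ℝ) → ℝ) (j m : Fin d → ℕ) : ℝ :=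
  ∫ x in unitBox d, f x * haarD j m x

/-- The anchored local discrepancy `Δ_P([0,t))` of the point set `P`. -/
noncomputable def discAnch {d N : ℕ} (P : Fin N → Fin d → ℝ) (t : Fin d → ℝ) : ℝ :=
  ((Finset.univ.filter fun i => ∀ k, 0 ≤ P i k ∧ P i k < t k).card : ℝ) / N
    - ∏ k, t k

/-- The local discrepancy `Δ_P([a,b))` of the point set `P` on the box `[a,b)`. -/
noncomputable def discBoxFn {d N : ℕ} (P : Fin N → Fin d → ℝ) (a b : Fin d → ℝ) : ℝ :=
  ((Finset.univ.filter fun i => ∀ k, a k ≤ P i k ∧ P i k < b k).card : ℝ) / N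
    - ∏ k, (b k - a k)

/-- Squared extreme (unanchored) `L₂`-discrepancy. -/
noncomputable def L2extrSq {d N : ℕ} (P : Fin N → Fin d → ℝ) : ℝ :=
  ∫ x in unitBox d, ∫ y in unitBox d,
    (if x ≤ y then (discBoxFn P x y) ^ 2 else 0)

/-- The squared (product dyadic) BMO seminorm of `f`, via Haar coefficients. -/
noncomputable def bmoSq {d : ℕ} (f : (Fin d → ℝ) → ℝ) : ℝ :=
  ⨆ U : {U : Set (Fin d → ℝ) // MeasurableSet U ∧ U ⊆ unitBox d ∧ 0 < volume U},
    (volume U.1).toReal⁻¹ *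
      ∑' j : Fin d → ℕ, (2 : ℝ) ^ (∑ i, j i) *
        ∑ m ∈ Fintype.piFinset (fun i => Finset.range (2 ^ j i)),
          (if dyadicBox j m ⊆ U.1 then (haarCoef f j m) ^ 2 else 0)

/-! ### Auxiliary lemmas -/

lemma haar1_mul_eq (j m : ℕ) (x : ℝ) :
    x * haar1 j m x =
      (Set.Ico ((m : ℝ) / 2 ^ j) (((m : ℝ) + 1 / 2) / 2 ^ j)).indicator id x
        - (Set.Ico (((m : ℝ) + 1 / 2) / 2 ^ j) (((m : ℝ) + 1) / 2 ^ j)).indicator id x := by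
  unfold haar1
  split_ifs with h1 h2
  · have h2 : x ∉ Set.Ico (((m : ℝ) + 1 / 2) / 2 ^ j) (((m : ℝ) + 1) / 2 ^ j) := by
      intro h; exact absurd h1.2 (not_lt.2 h.1)
    rw [Set.indicator_of_mem h1, Set.indicator_of_notMem h2, id, sub_zero, mul_one]
  · rw [Set.indicator_of_notMem h1, Set.indicator_of_mem h2, id, zero_sub, mul_neg_one]
  · rw [Set.indicator_of_notMem h1, Set.indicator_of_notMem h2, sub_zero, mul_zero]

lemma integrable_ico_indicator_id (a b : ℝ) :
    Integrable ((Set.Ico a b).indicator (id : ℝ → ℝ)) := by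
  rw [integrable_indicator_iff measurableSet_Ico]
  exact (continuous_id.integrableOn_Icc).mono_set Set.Ico_subset_Icc_self

lemma setIntegral_Ico_id (a b : ℝ) (h : a ≤ b) :
    ∫ x in Set.Ico a b, (id x : ℝ) = (b ^ 2 - a ^ 2) / 2 := by
  have : ∫ x in Set.Ico a b, (id x : ℝ) = ∫ x in Set.Ioc a b, (id x : ℝ) :=
    setIntegral_congr_set Ico_ae_eq_Ioc
  rw [this, ← intervalIntegral.integral_of_le h]
  simpa using integral_id (a := a) (b := b)

lemma integral_haar1_mul (j m : ℕ) :
    ∫ x : ℝ, x * haar1 j m x = -((1/4) * (1/4 : ℝ) ^ j) := by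
  have hp : (0:ℝ) < 2 ^ j := by positivity
  have h1 : (m : ℝ) / 2 ^ j ≤ ((m : ℝ) + 1/2) / 2 ^ j := by gcongr; linarith
  have h2 : ((m : ℝ) + 1/2) / 2 ^ j ≤ ((m : ℝ) + 1) / 2 ^ j := by gcongr; linarith
  have : ∫ x : ℝ, x * haar1 j m x =
      (∫ x in Set.Ico ((m : ℝ) / 2 ^ j) (((m : ℝ) + 1 / 2) / 2 ^ j), (id x : ℝ))
        - ∫ x in Set.Ico (((m : ℝ) + 1 / 2) / 2 ^ j) (((m : ℝ) + 1) / 2 ^ j), (id x : ℝ) := by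
    rw [← integral_indicator measurableSet_Ico, ← integral_indicator measurableSet_Ico,
      ← integral_sub (integrable_ico_indicator_id _ _) (integrable_ico_indicator_id _ _)]
    exact integral_congr_ae (Filter.Eventually.of_forall fun x => haar1_mul_eq j m x)
  rw [this, setIntegral_Ico_id _ _ h1, setIntegral_Ico_id _ _ h2]
  have h4 : ((2:ℝ) ^ j) ^ 2 = 4 ^ j := by
    rw [← pow_mul, show (4:ℝ) = 2^2 by norm_num, ← pow_mul, mul_comm]
  have h4' : (1/4 : ℝ) ^ j = 1 / ((2:ℝ)^j)^2 := by rw [h4, one_div_pow]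
  rw [h4']
  field_simp
  ring

lemma haar1_eq_zero {j m : ℕ} {x : ℝ} (hx : x ∉ dyadicI j m) : haar1 j m x = 0 := by
  have hp : (0:ℝ) < 2 ^ j := by positivity
  unfold haar1
  rw [if_neg, if_neg]
  · intro h; exact hx ⟨le_trans (by gcongr; linarith) h.1, h.2⟩
  · intro h; exact hx ⟨h.1, lt_of_lt_of_le h.2 (by gcongr; linarith)⟩

lemma dyadicI_subset {j m : ℕ} (hm : m < 2 ^ j) : dyadicI j m ⊆ Set.Ico (0:ℝ) 1 := by
  have hp : (0:ℝ) < 2 ^ j := by positivity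
  intro x hx
  refine ⟨le_trans (by positivity) hx.1, lt_of_lt_of_le hx.2 ?_⟩
  rw [div_le_one hp]
  have : (m : ℝ) + 1 ≤ ((2:ℕ) ^ j : ℕ) := by exact_mod_cast Nat.succ_le_of_lt hm
  simpa using this

lemma haarCoef_eq {d : ℕ} (j m : Fin d → ℕ) (hm : ∀ i, m i < 2 ^ j i) :
    haarCoef (fun t : Fin d → ℝ => -∏ i, t i) j m
      = -∏ i, (-((1/4) * (1/4 : ℝ) ^ j i)) := by
  have hcong : ∀ x : Fin d → ℝ,
      (-∏ i, x i) * haarD j m x = -(∏ i, (x i * haar1 (j i) (m i) (x i))) := by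
    intro x
    rw [haarD, neg_mul, ← Finset.prod_mul_distrib]
  have h1 : haarCoef (fun t : Fin d → ℝ => -∏ i, t i) j m
      = ∫ x in unitBox d, -(∏ i, (x i * haar1 (j i) (m i) (x i))) := by
    unfold haarCoef
    exact integral_congr_ae (Filter.Eventually.of_forall fun x => hcong x)
  rw [h1, integral_neg]
  have h2 : (∫ x in unitBox d, ∏ i, (x i * haar1 (j i) (m i) (x i)))
      = ∫ x : Fin d → ℝ, ∏ i, (x i * haar1 (j i) (m i) (x i)) := by
    apply setIntegral_eq_integral_of_forall_compl_eq_zero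
    intro x hx
    simp only [unitBox, Set.mem_pi, Set.mem_univ, forall_true_left] at hx
    push_neg at hx
    obtain ⟨i, hi⟩ := hx
    apply Finset.prod_eq_zero (Finset.mem_univ i)
    rw [haar1_eq_zero, mul_zero]
    exact fun h => hi (dyadicI_subset (hm i) h)
  rw [h2]
  rw [volume_pi, MeasureTheory.integral_fintype_prod_eq_prod (𝕜 := ℝ) (ι := Fin d)
    (fun i (x : ℝ) => x * haar1 (j i) (m i) x)]
  congr 1
  exact Finset.prod_congr rfl fun i _ => integral_haar1_mul (j i) (m i)

lemma haarCoef_sq {d : ℕ} (j m : Fin d → ℕ) (hm : ∀ i, m i < 2 ^ j i) :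
    (haarCoef (fun t : Fin d → ℝ => -∏ i, t i) j m) ^ 2
      = ∏ i, ((1/16) * (1/16 : ℝ) ^ j i) := by
  rw [haarCoef_eq j m hm, neg_sq, ← Finset.prod_pow]
  exact Finset.prod_congr rfl fun i _ => by
    rw [neg_sq, mul_pow, ← pow_mul, mul_comm (j i) 2, pow_mul]; norm_num

lemma volume_unitBox (d : ℕ) : volume (unitBox d) = 1 := by
  rw [unitBox, volume_pi_pi]
  simp

lemma measurable_dyadicBox {d : ℕ} (j m : Fin d → ℕ) : MeasurableSet (dyadicBox j m) :=
  MeasurableSet.univ_pi fun i => measurableSet_Ico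

lemma volume_dyadicBox {d : ℕ} (j m : Fin d → ℕ) :
    volume (dyadicBox j m) = ENNReal.ofReal (∏ i, ((1/2 : ℝ)) ^ j i) := by
  rw [dyadicBox, volume_pi_pi]
  simp only [dyadicI, Real.volume_Ico]
  rw [← ENNReal.ofReal_prod_of_nonneg (fun i _ => by
    have hp : (0:ℝ) < 2 ^ (j i) := by positivity
    rw [div_sub_div_same, add_sub_cancel_left]; positivity)]
  congr 1
  refine Finset.prod_congr rfl fun i _ => ?_
  have hp : (0:ℝ) < 2 ^ (j i) := by positivity
  rw [div_sub_div_same, add_sub_cancel_left, one_div, one_div, inv_pow]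

lemma dyadicI_disjoint {j m m' : ℕ} (h : m ≠ m') :
    Disjoint (dyadicI j m) (dyadicI j m') := by
  rw [Set.disjoint_left]
  intro x hx hx'
  have hp : (0:ℝ) < 2 ^ j := by positivity
  apply h
  have h1 : (m : ℝ) < m' + 1 := by
    have := lt_of_le_of_lt hx.1 hx'.2
    rwa [div_lt_div_iff_of_pos_right hp] at this
  have h2 : (m' : ℝ) < m + 1 := by
    have := lt_of_le_of_lt hx'.1 hx.2
    rwa [div_lt_div_iff_of_pos_right hp] at this
  have h1' : m < m' + 1 := by exact_mod_cast h1
  have h2' : m' < m + 1 := by exact_mod_cast h2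
  omega

lemma dyadicBox_disjoint {d : ℕ} {j m m' : Fin d → ℕ} (h : m ≠ m') :
    Disjoint (dyadicBox j m) (dyadicBox j m') := by
  obtain ⟨i, hi⟩ := Function.ne_iff.1 h
  rw [Set.disjoint_left]
  intro x hx hx'
  exact Set.disjoint_left.1 (dyadicI_disjoint hi) (hx i (Set.mem_univ i)) (hx' i (Set.mem_univ i))

lemma count_le {d : ℕ} (U : Set (Fin d → ℝ)) (hsub : U ⊆ unitBox d)
    (j : Fin d → ℕ) :
    (((Fintype.piFinset fun i => Finset.range (2 ^ j i)).filter
        fun m => dyadicBox j m ⊆ U).card : ℝ) * ∏ i, ((1/2 : ℝ)) ^ j i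
      ≤ (volume U).toReal := by
  set F := (Fintype.piFinset fun i => Finset.range (2 ^ j i)).filter
      fun m => dyadicBox j m ⊆ U with hF
  have hdisj : (F : Set (Fin d → ℕ)).PairwiseDisjoint (fun m => dyadicBox j m) :=
    fun m _ m' _ h => dyadicBox_disjoint h
  have hmeas := measure_biUnion_finset (μ := volume) hdisj fun m _ => measurable_dyadicBox j m
  have hsub2 : (⋃ m ∈ F, dyadicBox j m) ⊆ U := by
    apply Set.iUnion₂_subset
    intro m hm
    exact (Finset.mem_filter.1 hm).2
  have hle : ∑ m ∈ F, volume (dyadicBox j m) ≤ volume U :=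
    hmeas ▸ measure_mono hsub2
  rw [Finset.sum_congr rfl (fun m _ => volume_dyadicBox j m), Finset.sum_const,
    nsmul_eq_mul] at hle
  have hfin : volume U ≠ ⊤ := by
    refine ne_top_of_le_ne_top ?_ (measure_mono hsub)
    rw [volume_unitBox]; exact ENNReal.one_ne_top
  have := ENNReal.toReal_mono hfin hle
  rw [ENNReal.toReal_mul, ENNReal.toReal_ofReal (by positivity)] at this
  simpa using this

lemma pi_summable_tsum {d : ℕ} (g : ℕ → ℝ) (h0 : ∀ n, 0 ≤ g n) (hs : Summable g) :
    Summable (fun j : Fin d → ℕ => ∏ i, g (j i)) ∧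
      (∑' j : Fin d → ℕ, ∏ i, g (j i)) = (∑' n, g n) ^ d := by
  induction d with
  | zero =>
    haveI : Unique (Fin 0 → ℕ) := ⟨⟨fun i => i.elim0⟩, fun f => funext fun i => i.elim0⟩
    have h : HasSum (fun j : Fin 0 → ℕ => ∏ i, g (j i)) 1 := by
      have := hasSum_single (f := fun j : Fin 0 → ℕ => ∏ i, g (j i)) default
        (fun b hb => (hb (Subsingleton.elim b default)).elim)
      simpa using this
    exact ⟨h.summable, by rw [h.tsum_eq, pow_zero]⟩
  | succ n ih =>
    obtain ⟨ihs, iht⟩ := ih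
    set e := Fin.consEquiv (fun _ : Fin (n+1) => ℕ) with he
    have hcomp : ∀ p : ℕ × (Fin n → ℕ),
        (∏ i, g (e p i)) = g p.1 * ∏ i, g (p.2 i) := by
      intro p
      rw [Fin.prod_univ_succ]
      simp [he, Fin.consEquiv]
    have h1 : (0 : ℕ → ℝ) ≤ g := fun k => h0 k
    have h2 : (0 : (Fin n → ℕ) → ℝ) ≤ fun j : Fin n → ℕ => ∏ i, g (j i) :=
      fun v => Finset.prod_nonneg fun i _ => h0 _
    have hsum2 : Summable (fun p : ℕ × (Fin n → ℕ) => g p.1 * ∏ i, g (p.2 i)) := by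
      have := Summable.mul_of_nonneg (ι := ℕ) (ι' := Fin n → ℕ) hs ihs h1 h2
      exact this
    have hsum1 : Summable (fun j : Fin (n+1) → ℕ => ∏ i, g (j i)) := by
      rw [← e.summable_iff]
      exact hsum2.congr fun p => (hcomp p).symm
    refine ⟨hsum1, ?_⟩
    rw [← e.tsum_eq (fun j : Fin (n+1) → ℕ => ∏ i, g (j i))]
    rw [tsum_congr hcomp, ← Summable.tsum_mul_tsum hs ihs hsum2, iht, pow_succ, mul_comm]

lemma dyadicBox_subset_unitBox {d : ℕ} {j m : Fin d → ℕ} (hm : ∀ i, m i < 2 ^ j i) :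
    dyadicBox j m ⊆ unitBox d := by
  intro x hx i _
  exact dyadicI_subset (hm i) (hx i (Set.mem_univ i))

theorem initial_bmo_discrepancy (d : ℕ) (hd : 1 ≤ d) :
    bmoSq (fun t : Fin d → ℝ => -∏ i, t i) = (1 / 12) ^ d := by
  classical
  set f : (Fin d → ℝ) → ℝ := fun t => -∏ i, t i with hf
  set g4 : ℕ → ℝ := fun n => (1/16) * (1/4 : ℝ) ^ n with hg4
  have hg0 : ∀ n, 0 ≤ g4 n := fun n => by positivity
  have hgs : Summable g4 :=
    (summable_geometric_of_lt_one (by norm_num) (by norm_num)).mul_left _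
  obtain ⟨hBs, hBt⟩ := pi_summable_tsum (d := d) g4 hg0 hgs
  set B : (Fin d → ℕ) → ℝ := fun j => ∏ i, g4 (j i) with hB
  have hB0 : ∀ j, 0 ≤ B j := fun j => Finset.prod_nonneg fun i _ => hg0 _
  have htg : (∑' n, g4 n) = 1/12 := by
    rw [hg4]
    rw [tsum_mul_left, tsum_geometric_of_lt_one (by norm_num) (by norm_num)]
    norm_num
  have hBt' : (∑' j : Fin d → ℕ, B j) = (1/12 : ℝ) ^ d := by rw [hB, hBt, htg]
  -- the generic term of the series
  have key : ∀ (U : Set (Fin d → ℝ)), ∀ j : Fin d → ℕ,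
      (2 : ℝ) ^ (∑ i, j i) *
        ∑ m ∈ Fintype.piFinset (fun i => Finset.range (2 ^ j i)),
          (if dyadicBox j m ⊆ U then (haarCoef f j m) ^ 2 else 0)
      = ((((Fintype.piFinset fun i => Finset.range (2 ^ j i)).filter
            fun m => dyadicBox j m ⊆ U).card : ℝ) * ∏ i, ((1/2 : ℝ)) ^ j i) * B j := by
    intro U j
    have hsum : ∑ m ∈ Fintype.piFinset (fun i => Finset.range (2 ^ j i)),
        (if dyadicBox j m ⊆ U then (haarCoef f j m) ^ 2 else 0)
        = ∑ m ∈ Fintype.piFinset (fun i => Finset.range (2 ^ j i)),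
          (if dyadicBox j m ⊆ U then (∏ i, ((1/16) * (1/16 : ℝ) ^ j i)) else 0) := by
      refine Finset.sum_congr rfl fun m hm => ?_
      have hmlt : ∀ i, m i < 2 ^ j i := fun i =>
        Finset.mem_range.1 (Fintype.mem_piFinset.1 hm i)
      rw [haarCoef_sq j m hmlt]
    have hCB : (2 : ℝ) ^ (∑ i, j i) * ∏ i, ((1/16) * (1/16 : ℝ) ^ j i)
        = (∏ i, ((1/2 : ℝ)) ^ j i) * B j := by
      rw [← Finset.prod_pow_eq_pow_sum, ← Finset.prod_mul_distrib, hB,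
        ← Finset.prod_mul_distrib]
      refine Finset.prod_congr rfl fun i _ => ?_
      rw [hg4, mul_left_comm, ← mul_pow, mul_left_comm, ← mul_pow]
      norm_num
    rw [hsum, ← Finset.sum_filter, Finset.sum_const, nsmul_eq_mul, mul_left_comm, hCB]
    ring
  have hUnit : MeasurableSet (unitBox d) := MeasurableSet.univ_pi fun _ => measurableSet_Ico
  have hUnitPos : (0 : ENNReal) < volume (unitBox d) := by rw [volume_unitBox]; norm_num
  haveI hne : Nonempty {U : Set (Fin d → ℝ) //
      MeasurableSet U ∧ U ⊆ unitBox d ∧ 0 < volume U} :=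
    ⟨⟨unitBox d, hUnit, subset_rfl, hUnitPos⟩⟩
  -- upper bound for every U
  have upper : ∀ U : {U : Set (Fin d → ℝ) //
      MeasurableSet U ∧ U ⊆ unitBox d ∧ 0 < volume U},
      (volume U.1).toReal⁻¹ *
        ∑' j : Fin d → ℕ, (2 : ℝ) ^ (∑ i, j i) *
          ∑ m ∈ Fintype.piFinset (fun i => Finset.range (2 ^ j i)),
            (if dyadicBox j m ⊆ U.1 then (haarCoef f j m) ^ 2 else 0)
      ≤ (1/12 : ℝ) ^ d := by
    rintro ⟨U, hU, hsub, hpos⟩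
    have hfin : volume U ≠ ⊤ := by
      refine ne_top_of_le_ne_top ?_ (measure_mono hsub)
      rw [volume_unitBox]; exact ENNReal.one_ne_top
    have hvpos : 0 < (volume U).toReal := ENNReal.toReal_pos hpos.ne' hfin
    have hTle : ∀ j : Fin d → ℕ,
        (2 : ℝ) ^ (∑ i, j i) *
          ∑ m ∈ Fintype.piFinset (fun i => Finset.range (2 ^ j i)),
            (if dyadicBox j m ⊆ U then (haarCoef f j m) ^ 2 else 0)
        ≤ (volume U).toReal * B j := by
      intro j
      rw [key U j]
      exact mul_le_mul_of_nonneg_right (count_le U hsub j) (hB0 j)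
    have hT0 : ∀ j : Fin d → ℕ,
        0 ≤ (2 : ℝ) ^ (∑ i, j i) *
          ∑ m ∈ Fintype.piFinset (fun i => Finset.range (2 ^ j i)),
            (if dyadicBox j m ⊆ U then (haarCoef f j m) ^ 2 else 0) := by
      intro j
      rw [key U j]
      have h1 : (0:ℝ) ≤ ∏ i, ((1/2 : ℝ)) ^ j i := by positivity
      have := hB0 j
      positivity
    set T : (Fin d → ℕ) → ℝ := fun j => (2 : ℝ) ^ (∑ i, j i) *
        ∑ m ∈ Fintype.piFinset (fun i => Finset.range (2 ^ j i)),
          (if dyadicBox j m ⊆ U then (haarCoef f j m) ^ 2 else 0) with hT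
    have hsB : Summable (fun j => (volume U).toReal * B j) := hBs.mul_left _
    have hTs : Summable T := Summable.of_nonneg_of_le hT0 hTle hsB
    have h1 : (∑' j, T j) ≤ (volume U).toReal * (1/12 : ℝ) ^ d := by
      calc (∑' j, T j) ≤ ∑' j, (volume U).toReal * B j := Summable.tsum_le_tsum hTle hTs hsB
        _ = (volume U).toReal * (1/12 : ℝ) ^ d := by rw [tsum_mul_left, hBt']
    calc (volume U).toReal⁻¹ * ∑' j, T j
        ≤ (volume U).toReal⁻¹ * ((volume U).toReal * (1/12 : ℝ) ^ d) :=
          mul_le_mul_of_nonneg_left h1 (by positivity)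
      _ = (1/12 : ℝ) ^ d := by
          rw [← mul_assoc, inv_mul_cancel₀ hvpos.ne', one_mul]
  -- value at the unit box
  have unitval :
      (volume (unitBox d)).toReal⁻¹ *
        ∑' j : Fin d → ℕ, (2 : ℝ) ^ (∑ i, j i) *
          ∑ m ∈ Fintype.piFinset (fun i => Finset.range (2 ^ j i)),
            (if dyadicBox j m ⊆ unitBox d then (haarCoef f j m) ^ 2 else 0)
      = (1/12 : ℝ) ^ d := by
    have hTj : ∀ j : Fin d → ℕ,
        (2 : ℝ) ^ (∑ i, j i) *
          ∑ m ∈ Fintype.piFinset (fun i => Finset.range (2 ^ j i)),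
            (if dyadicBox j m ⊆ unitBox d then (haarCoef f j m) ^ 2 else 0) = B j := by
      intro j
      rw [key (unitBox d) j]
      have hfilter : ((Fintype.piFinset fun i => Finset.range (2 ^ j i)).filter
          fun m => dyadicBox j m ⊆ unitBox d)
          = Fintype.piFinset fun i => Finset.range (2 ^ j i) := by
        refine Finset.filter_true_of_mem fun m hm => ?_
        exact dyadicBox_subset_unitBox fun i =>
          Finset.mem_range.1 (Fintype.mem_piFinset.1 hm i)
      rw [hfilter, Fintype.card_piFinset]
      simp only [Finset.card_range]
      rw [show ((∏ i, 2 ^ j i : ℕ) : ℝ) = ∏ i, (2:ℝ) ^ j i by push_cast; rfl]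
      rw [← Finset.prod_mul_distrib]
      have : ∏ i, ((2:ℝ) ^ j i * (1/2 : ℝ) ^ j i) = 1 := by
        refine Finset.prod_eq_one fun i _ => ?_
        rw [← mul_pow]
        norm_num
      rw [this, one_mul]
    rw [tsum_congr hTj, hBt', volume_unitBox]
    norm_num
  -- conclude
  rw [bmoSq]
  apply le_antisymm
  · exact ciSup_le upper
  · have hbdd : BddAbove (Set.range fun U : {U : Set (Fin d → ℝ) //
        MeasurableSet U ∧ U ⊆ unitBox d ∧ 0 < volume U} =>
        (volume U.1).toReal⁻¹ *
          ∑' j : Fin d → ℕ, (2 : ℝ) ^ (∑ i, j i) *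
            ∑ m ∈ Fintype.piFinset (fun i => Finset.range (2 ^ j i)),
              (if dyadicBox j m ⊆ U.1 then (haarCoef f j m) ^ 2 else 0)) := by
      refine ⟨(1/12 : ℝ) ^ d, ?_⟩
      rintro x ⟨U, rfl⟩
      exact upper U
    have := le_ciSup hbdd (⟨unitBox d, hUnit, subset_rfl, hUnitPos⟩ :
      {U : Set (Fin d → ℝ) // MeasurableSet U ∧ U ⊆ unitBox d ∧ 0 < volume U})
    rwa [unitval] at this
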